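/- Let ι be a nonempty finite index set, q : ι → ℝ², f : ι → ℝ, and F(x) = max_{i ∈ ι} (dist(x, q_i) + f_i). Then there exists a unique point x* ∈ ℝ² such that F(x*) ≤ F(y) for all y ∈ ℝ²; that is, the smallest circle enclosing the circles C(q_i, f_i) has a unique center. -/
import Mathlib

/-- The smallest circle enclosing the circles `C(q i, f i)` has a unique center:
`F x = max_i (dist x (q i) + f i)` has a unique global minimizer. -/
theorem smallest_enclosing_circle_unique_center {ι : Type*} [Fintype ι] [Nonempty ι]
    (q : ι → EuclideanSpace ℝ (Fin 2)) (f : ι → ℝ)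
    (F : EuclideanSpace ℝ (Fin 2) → ℝ)
    (hF : ∀ x, F x = Finset.univ.sup' Finset.univ_nonempty fun i => dist x (q i) + f i) :
    ∃! x : EuclideanSpace ℝ (Fin 2), ∀ y, F x ≤ F y := by
  obtain ⟨i₀⟩ := ‹Nonempty ι›
  -- continuity
  have hcont : Continuous F := by
    have : Continuous fun x : EuclideanSpace ℝ (Fin 2) =>
        Finset.univ.sup' Finset.univ_nonempty fun i => dist x (q i) + f i :=
      Continuous.finset_sup'_apply Finset.univ_nonempty fun i _ =>
        (continuous_id.dist continuous_const).add continuous_const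
    simpa [funext hF] using this
  -- coercivity
  have hcoe : Filter.Tendsto F (Filter.cocompact _) Filter.atTop := by
    have h1 : Filter.Tendsto (fun x : EuclideanSpace ℝ (Fin 2) => ‖x‖ - ‖q i₀‖ + f i₀)
        (Filter.cocompact _) Filter.atTop :=
      (tendsto_norm_cocompact_atTop.atTop_add tendsto_const_nhds).atTop_add
        tendsto_const_nhds
    refine Filter.tendsto_atTop_mono (fun x => ?_) h1
    calc ‖x‖ - ‖q i₀‖ + f i₀ ≤ dist x (q i₀) + f i₀ := by
          have := norm_sub_norm_le x (q i₀)
          rw [← dist_eq_norm] at this; linarith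
      _ ≤ F x := by rw [hF]; exact Finset.le_sup' (fun i => dist x (q i) + f i) (Finset.mem_univ i₀)
  obtain ⟨x, hx⟩ := hcont.exists_forall_le hcoe
  refine ⟨x, hx, fun y hy => ?_⟩
  -- uniqueness
  have hm : F y = F x := le_antisymm (hy x) (hx y)
  set z := midpoint ℝ y x with hz
  obtain ⟨i, -, hi⟩ := Finset.exists_mem_eq_sup' (Finset.univ_nonempty (α := ι))
    (fun i => dist z (q i) + f i)
  have hzF : F x ≤ dist z (q i) + f i := by rw [← hi, ← hF]; exact hx z
  have hxi : dist x (q i) + f i ≤ F x := by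
    rw [hF]; exact Finset.le_sup' (fun i => dist x (q i) + f i) (Finset.mem_univ i)
  have hyi : dist y (q i) + f i ≤ F x := by
    rw [← hm, hF]; exact Finset.le_sup' (fun i => dist y (q i) + f i) (Finset.mem_univ i)
  set a := y - q i with ha
  set b := x - q i with hb
  have hkey : a + b = (2 : ℝ) • (z - q i) := by
    rw [ha, hb, hz, midpoint_eq_smul_add, invOf_eq_inv]; module
  have hzd : dist z (q i) = ‖a + b‖ / 2 := by
    rw [dist_eq_norm, hkey, norm_smul]
    simp [mul_comm]
  have hna : ‖a‖ = dist y (q i) := (dist_eq_norm y (q i)).symm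
  have hnb : ‖b‖ = dist x (q i) := (dist_eq_norm x (q i)).symm
  have htri : ‖a + b‖ ≤ ‖a‖ + ‖b‖ := norm_add_le a b
  have h1 : ‖a‖ = ‖b‖ := by rw [hzd] at hzF; linarith
  have h2 : ‖a + b‖ = ‖a‖ + ‖b‖ := by rw [hzd] at hzF; linarith
  have : a = b := eq_of_norm_eq_of_norm_add_eq h1 h2
  have : y - q i = x - q i := this
  exact sub_left_injective this
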